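/- If X ~ GIG(λ, cα, c) and U ~ GIG(λ, cβ, c) are independent, with c > 0, α, β > 0 and λ ∈ ℝ, then F(X,U) has the same joint distribution as (X,U), where F is the discrete KdV map with parameters (α, β). -/

import Mathlib

open MeasureTheory Set ENNReal

lemma map_withDensity_comp' {X Y : Type*} [MeasurableSpace X] [MeasurableSpace Y]
    (μ : Measure X) {F : X → Y} (hFm : Measurable F) {ρ : Y → ℝ≥0∞} (hρ : Measurable ρ) :
    Measure.map F (μ.withDensity fun p => ρ (F p)) = (Measure.map F μ).withDensity ρ := by
  ext A hA
  rw [Measure.map_apply hFm hA, withDensity_apply _ (hFm hA), withDensity_apply _ hA,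
    setLIntegral_map hA hρ hFm]

lemma hasFDerivAt_quot {N D : ℝ×ℝ → ℝ} {N' D' : ℝ×ℝ →L[ℝ] ℝ} {p : ℝ×ℝ}
    (hN : HasFDerivAt N N' p) (hD : HasFDerivAt D D' p) (h0 : D p ≠ 0) :
    HasFDerivAt (fun q => N q / D q) ((D p)⁻¹ • N' - (N p / (D p)^2) • D') p := by
  have hinv : HasFDerivAt (fun q => (D q)⁻¹) ((-(D p ^ 2)⁻¹) • D') p := by
    have h := (hasFDerivAt_inv h0).comp p hD
    have heq : (ContinuousLinearMap.toSpanSingleton ℝ (-(D p ^ 2)⁻¹)).comp D'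
        = (-(D p ^ 2)⁻¹) • D' := by
      refine ContinuousLinearMap.ext fun w => ?_
      simp [mul_comm]
    rw [heq] at h
    exact h
  have h2 := hN.mul hinv
  have h3 : N p • ((-(D p ^ 2)⁻¹) • D') + (D p)⁻¹ • N'
      = (D p)⁻¹ • N' - (N p / (D p)^2) • D' := by
    refine ContinuousLinearMap.ext fun w => ?_
    simp
    ring
  rw [h3] at h2
  simp only [div_eq_mul_inv]
  exact h2

lemma hasFDerivAt_phi (α β : ℝ) (p : ℝ×ℝ) (hA : 1 + α*p.1*p.2 ≠ 0) (hB : 1 + β*p.1*p.2 ≠ 0) :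
    HasFDerivAt (fun q : ℝ×ℝ =>
      (q.2*(1+β*q.1*q.2)/(1+α*q.1*q.2), q.1*(1+α*q.1*q.2)/(1+β*q.1*q.2)))
    (LinearMap.toContinuousLinearMap (Matrix.toLin (Module.Basis.finTwoProd ℝ) (Module.Basis.finTwoProd ℝ)
      !![(β-α)*p.2^2/(1+α*p.1*p.2)^2,
         ((1+α*p.1*p.2)*(1+β*p.1*p.2) + (β-α)*(p.1*p.2))/(1+α*p.1*p.2)^2;
         ((1+α*p.1*p.2)*(1+β*p.1*p.2) + (α-β)*(p.1*p.2))/(1+β*p.1*p.2)^2,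
         (α-β)*p.1^2/(1+β*p.1*p.2)^2])) p := by
  rw [Matrix.toLin_finTwoProd_toContinuousLinearMap]
  have h1 := hasFDerivAt_quot
    (hasFDerivAt_snd.mul (((hasFDerivAt_fst.const_mul β).mul hasFDerivAt_snd).const_add 1))
    (((hasFDerivAt_fst.const_mul α).mul hasFDerivAt_snd).const_add 1) hA
  have h2 := hasFDerivAt_quot
    (hasFDerivAt_fst.mul (((hasFDerivAt_fst.const_mul α).mul hasFDerivAt_snd).const_add 1))
    (((hasFDerivAt_fst.const_mul β).mul hasFDerivAt_snd).const_add 1) hB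
  refine (h1.prodMk h2).congr_fderiv ?_
  congr 1 <;>
  · refine ContinuousLinearMap.ext fun w => ?_
    simp
    field_simp
    ring

theorem dKdV_GIG_detailed_balance (α β lam c : ℝ)
    (hα : 0 < α) (hβ : 0 < β) (hc : 0 < c)
    (μ ν : Measure ℝ) [IsProbabilityMeasure μ] [IsProbabilityMeasure ν]
    (Z₁ Z₂ : ℝ) (hZ₁ : 0 < Z₁) (hZ₂ : 0 < Z₂)
    (hμ : μ = volume.withDensity fun x =>
      ENNReal.ofReal (if 0 < x then
        Z₁ * x ^ (-lam - 1) * Real.exp (-(c * α) * x - c * x⁻¹) else 0))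
    (hν : ν = volume.withDensity fun x =>
      ENNReal.ofReal (if 0 < x then
        Z₂ * x ^ (-lam - 1) * Real.exp (-(c * β) * x - c * x⁻¹) else 0))
    (F : ℝ × ℝ → ℝ × ℝ)
    (hF : ∀ x u : ℝ, F (x, u) =
      (u * (1 + β * x * u) / (1 + α * x * u),
       x * (1 + α * x * u) / (1 + β * x * u))) :
    Measure.map F (μ.prod ν) = μ.prod ν := by
  subst hμ hν
  set f : ℝ → ℝ≥0∞ := fun x => ENNReal.ofReal (if 0 < x then
    Z₁ * x ^ (-lam - 1) * Real.exp (-(c * α) * x - c * x⁻¹) else 0) with hf_def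
  set g : ℝ → ℝ≥0∞ := fun x => ENNReal.ofReal (if 0 < x then
    Z₂ * x ^ (-lam - 1) * Real.exp (-(c * β) * x - c * x⁻¹) else 0) with hg_def
  -- basic measurability
  have hfm : Measurable f := by
    rw [hf_def]
    refine ENNReal.measurable_ofReal.comp (Measurable.ite measurableSet_Ioi ?_ measurable_const)
    exact ((measurable_id.pow_const _).const_mul Z₁).mul
      (Real.measurable_exp.comp ((measurable_id.const_mul _).sub (measurable_inv.const_mul c)))
  have hgm : Measurable g := by
    rw [hg_def]
    refine ENNReal.measurable_ofReal.comp (Measurable.ite measurableSet_Ioi ?_ measurable_const)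
    exact ((measurable_id.pow_const _).const_mul Z₂).mul
      (Real.measurable_exp.comp ((measurable_id.const_mul _).sub (measurable_inv.const_mul c)))
  -- F is a concrete measurable function
  have hFeq : F = fun q : ℝ×ℝ =>
      (q.2*(1+β*q.1*q.2)/(1+α*q.1*q.2), q.1*(1+α*q.1*q.2)/(1+β*q.1*q.2)) := by
    funext p
    rw [show p = (p.1, p.2) from rfl, hF p.1 p.2]
  have hFmeas : Measurable F := by
    rw [hFeq]
    apply Measurable.prod <;> dsimp only <;> fun_prop
  -- the S domain
  set S : Set (ℝ×ℝ) := Ioi (0:ℝ) ×ˢ Ioi (0:ℝ) with hS_def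
  have hS : MeasurableSet S := measurableSet_Ioi.prod measurableSet_Ioi
  -- joint density
  set ρ : ℝ×ℝ → ℝ≥0∞ := fun p => f p.1 * g p.2 with hρ_def
  have hρm : Measurable ρ := (hfm.comp measurable_fst).mul (hgm.comp measurable_snd)
  -- positivity helpers
  have hAB : ∀ (γ : ℝ), 0 < γ → ∀ p : ℝ×ℝ, p ∈ S → 0 < 1 + γ * p.1 * p.2 := by
    rintro γ hγ ⟨x, u⟩ ⟨hx, hu⟩
    have : (0:ℝ) < γ * x * u := mul_pos (mul_pos hγ hx) hu
    linarith
  -- F maps S to S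
  have hFS : ∀ p ∈ S, F p ∈ S := by
    rintro ⟨x, u⟩ hp
    obtain ⟨hx, hu⟩ := hp
    have hA := hAB α hα (x, u) ⟨hx, hu⟩
    have hB := hAB β hβ (x, u) ⟨hx, hu⟩
    rw [hF x u]
    exact ⟨div_pos (mul_pos hu hB) hA, div_pos (mul_pos hx hA) hB⟩
  -- F is an involution on S
  have hFF : ∀ p ∈ S, F (F p) = p := by
    rintro ⟨x, u⟩ hp
    obtain ⟨hx, hu⟩ := hp
    have hA := (hAB α hα (x, u) ⟨hx, hu⟩).ne'
    have hB := (hAB β hβ (x, u) ⟨hx, hu⟩).ne'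
    rw [hF x u, hF]
    have hA' : 1 + α * (x * u) ≠ 0 := by rw [← mul_assoc]; exact hA
    have hB' : 1 + β * (x * u) ≠ 0 := by rw [← mul_assoc]; exact hB
    have hA'' : 1 + α * x * u ≠ 0 := hA
    have hB'' : 1 + β * x * u ≠ 0 := hB
    have e1 : α * (u * (1 + β * x * u) / (1 + α * x * u))
        * (x * (1 + α * x * u) / (1 + β * x * u)) = α * (x * u) := by
      grind
    have e2 : β * (u * (1 + β * x * u) / (1 + α * x * u))
        * (x * (1 + α * x * u) / (1 + β * x * u)) = β * (x * u) := by
      grind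
    rw [Prod.mk.injEq]
    constructor
    · rw [e1, e2]
      grind
    · rw [e1, e2]
      grind
  have hInj : S.InjOn F := fun p hp q hq h => by rw [← hFF p hp, ← hFF q hq, h]
  have hImg : F '' S = S := by
    apply subset_antisymm
    · rintro _ ⟨p, hp, rfl⟩
      exact hFS p hp
    · intro p hp
      exact ⟨F p, hFS p hp, hFF p hp⟩
  -- derivative of F on S
  set M : ℝ×ℝ → (ℝ×ℝ →L[ℝ] ℝ×ℝ) := fun p =>
    LinearMap.toContinuousLinearMap (Matrix.toLin (Module.Basis.finTwoProd ℝ) (Module.Basis.finTwoProd ℝ)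
      !![(β-α)*p.2^2/(1+α*p.1*p.2)^2,
         ((1+α*p.1*p.2)*(1+β*p.1*p.2) + (β-α)*(p.1*p.2))/(1+α*p.1*p.2)^2;
         ((1+α*p.1*p.2)*(1+β*p.1*p.2) + (α-β)*(p.1*p.2))/(1+β*p.1*p.2)^2,
         (α-β)*p.1^2/(1+β*p.1*p.2)^2]) with hM_def
  have hMder : ∀ p ∈ S, HasFDerivWithinAt F (M p) S p := by
    intro p hp
    rw [hFeq]
    exact (hasFDerivAt_phi α β p (hAB α hα p hp).ne' (hAB β hβ p hp).ne').hasFDerivWithinAt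
  have hdet : ∀ p ∈ S, |(M p).det| = 1 := by
    intro p hp
    have hA := (hAB α hα p hp).ne'
    have hB := (hAB β hβ p hp).ne'
    have : (M p).det = -1 := by
      rw [hM_def]
      simp only [LinearMap.det_toContinuousLinearMap, LinearMap.det_toLin,
        Matrix.det_fin_two_of]
      have : 1 + α * p.2 * p.1 ≠ 0 := by rwa [mul_assoc, mul_comm p.2, ← mul_assoc]
      have : 1 + β * p.2 * p.1 ≠ 0 := by rwa [mul_assoc, mul_comm p.2, ← mul_assoc]
      field_simp
      ring
    rw [this]
    norm_num
  -- pushforward of Lebesgue on S is Lebesgue on S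
  have hmap0 : Measure.map F (volume.restrict S) = volume.restrict S := by
    have h := map_withDensity_abs_det_fderiv_eq_addHaar (volume : Measure (ℝ×ℝ)) hS.nullMeasurableSet
      hMder hInj
    rw [hImg] at h
    have h1 : ((volume.restrict S).withDensity fun p => ENNReal.ofReal |(M p).det|)
        = volume.restrict S := by
      have h2 : ((volume.restrict S).withDensity fun p => ENNReal.ofReal |(M p).det|)
          = (volume.restrict S).withDensity 1 := by
        apply withDensity_congr_ae
        refine (ae_restrict_iff' hS).2 (Filter.Eventually.of_forall fun p hp => ?_)
        simp only [Pi.one_apply]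
        rw [hdet p hp]
        simp
      rw [h2, withDensity_one]
    rwa [h1] at h
  -- density invariance on S
  have hρF : ∀ p ∈ S, ρ (F p) = ρ p := by
    rintro ⟨x, u⟩ hp
    obtain ⟨hx, hu⟩ := hp
    have hx' : (0:ℝ) < x := hx
    have hu' : (0:ℝ) < u := hu
    have hA := hAB α hα (x, u) ⟨hx, hu⟩
    have hB := hAB β hβ (x, u) ⟨hx, hu⟩
    have hy : (0:ℝ) < u * (1 + β * x * u) / (1 + α * x * u) :=
      div_pos (mul_pos hu' hB) hA
    have hv : (0:ℝ) < x * (1 + α * x * u) / (1 + β * x * u) :=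
      div_pos (mul_pos hx' hA) hB
    rw [hF x u]
    simp only [hρ_def, hf_def, hg_def]
    rw [if_pos hy, if_pos hv, if_pos hx', if_pos hu']
    rw [← ENNReal.ofReal_mul (by positivity), ← ENNReal.ofReal_mul (by positivity)]
    congr 1
    set s : ℝ := -lam - 1 with hs_def
    have hyv : u * (1 + β * x * u) / (1 + α * x * u) * (x * (1 + α * x * u) / (1 + β * x * u))
        = x * u := by field_simp
    have hrpow : (u * (1 + β * x * u) / (1 + α * x * u)) ^ s
        * (x * (1 + α * x * u) / (1 + β * x * u)) ^ s = x ^ s * u ^ s := by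
      rw [← Real.mul_rpow hy.le hv.le, hyv, Real.mul_rpow hx'.le hu'.le]
    have hexp : (-(c * α) * (u * (1 + β * x * u) / (1 + α * x * u))
          - c * (u * (1 + β * x * u) / (1 + α * x * u))⁻¹)
        + (-(c * β) * (x * (1 + α * x * u) / (1 + β * x * u))
          - c * (x * (1 + α * x * u) / (1 + β * x * u))⁻¹)
        = (-(c * α) * x - c * x⁻¹) + (-(c * β) * u - c * u⁻¹) := by
      field_simp
      ring
    calc Z₁ * (u * (1 + β * x * u) / (1 + α * x * u)) ^ s
          * Real.exp (-(c * α) * (u * (1 + β * x * u) / (1 + α * x * u))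
            - c * (u * (1 + β * x * u) / (1 + α * x * u))⁻¹)
          * (Z₂ * (x * (1 + α * x * u) / (1 + β * x * u)) ^ s
          * Real.exp (-(c * β) * (x * (1 + α * x * u) / (1 + β * x * u))
            - c * (x * (1 + α * x * u) / (1 + β * x * u))⁻¹))
        = (Z₁ * Z₂) * ((u * (1 + β * x * u) / (1 + α * x * u)) ^ s
            * (x * (1 + α * x * u) / (1 + β * x * u)) ^ s)
          * Real.exp ((-(c * α) * (u * (1 + β * x * u) / (1 + α * x * u))
            - c * (u * (1 + β * x * u) / (1 + α * x * u))⁻¹)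
            + (-(c * β) * (x * (1 + α * x * u) / (1 + β * x * u))
            - c * (x * (1 + α * x * u) / (1 + β * x * u))⁻¹)) := by
          rw [Real.exp_add]; ring
      _ = (Z₁ * Z₂) * (x ^ s * u ^ s)
            * Real.exp ((-(c * α) * x - c * x⁻¹) + (-(c * β) * u - c * u⁻¹)) := by
          rw [hrpow, hexp]
      _ = Z₁ * x ^ s * Real.exp (-(c * α) * x - c * x⁻¹)
            * (Z₂ * u ^ s * Real.exp (-(c * β) * u - c * u⁻¹)) := by
          rw [Real.exp_add]; ring
  -- the product measure as a density over ℝ²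
  have hprod : (volume.withDensity f).prod (volume.withDensity g)
      = (volume : Measure (ℝ×ℝ)).withDensity ρ := by
    refine Measure.prod_eq fun s t hs ht => ?_
    rw [withDensity_apply _ (hs.prod ht)]
    rw [Measure.volume_eq_prod, ← Measure.prod_restrict]
    simp only [hρ_def]
    rw [lintegral_prod_mul hfm.aemeasurable hgm.aemeasurable,
      withDensity_apply _ hs, withDensity_apply _ ht]
  -- density vanishes off S
  have hind : (volume : Measure (ℝ×ℝ)).withDensity ρ = (volume.restrict S).withDensity ρ := by
    rw [← withDensity_indicator hS]
    congr 1
    funext p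
    by_cases hp : p ∈ S
    · rw [Set.indicator_of_mem hp]
    · rw [Set.indicator_of_notMem hp]
      have h1 : ¬ (0 < p.1) ∨ ¬ (0 < p.2) := by
        by_contra hcon
        push_neg at hcon
        exact hp ⟨hcon.1, hcon.2⟩
      simp only [hρ_def, hf_def, hg_def]
      rcases h1 with h | h
      · rw [if_neg h]
        simp
      · rw [if_neg h]
        simp
  -- put everything together
  rw [hprod, hind]
  have step1 : ((volume.restrict S).withDensity ρ)
      = (volume.restrict S).withDensity fun p => ρ (F p) := by
    apply withDensity_congr_ae
    refine (ae_restrict_iff' hS).2 (Filter.Eventually.of_forall fun p hp => ?_)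
    exact (hρF p hp).symm
  rw [step1, map_withDensity_comp' _ hFmeas hρm, hmap0, ← step1]
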